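/- Let f ∈ ℚ[x] be a univariate polynomial of degree at most n with f(k) ∈ ℤ for all k ∈ ℤ. Then gcd{ k·f(k) : k ∈ ℤ } divides f(0) · lcm{1, 2, …, n+1}; equivalently, the integer f(0)·lcm{1,…,n+1} lies in the subgroup of ℤ generated by { k·f(k) : k ∈ ℤ }. (This is the numerical content of the uniform bound on the exponent of the Amitsur group: for a smooth projective G-variety X of dimension n with Hilbert polynomial f(k)=χ(kD), one has f(0)=1+(−1)ⁿ p_a.) -/
import Mathlib

open Finset Polynomial

private def fd {R : Type*} [Sub R] (g : ℤ → R) : ℤ → R := fun k => g (k + 1) - g k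

private lemma fd_succ {R : Type*} [Sub R] (g : ℤ → R) (j : ℕ) (m : ℤ) :
    fd^[j + 1] g m = fd^[j] g (m + 1) - fd^[j] g m := by
  rw [Function.iterate_succ_apply']; rfl

private lemma fd_cast (g : ℤ → ℤ) (i : ℕ) (k : ℤ) :
    ((fd^[i] g k : ℤ) : ℚ) = fd^[i] (fun m => ((g m : ℤ) : ℚ)) k := by
  induction i generalizing k with
  | zero => simp
  | succ i ih => rw [fd_succ, fd_succ]; push_cast [ih]; ring

private lemma fd_prod (F : ℤ → ℚ) (j : ℕ) (m : ℤ) :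
    fd^[j + 1] (fun k => (k : ℚ) * F k) m
      = (j + 1 : ℚ) * fd^[j] F (m + 1) + (m : ℚ) * fd^[j + 1] F m := by
  induction j generalizing m with
  | zero =>
      simp only [zero_add, Function.iterate_one, fd, Function.iterate_zero, id]
      push_cast; ring
  | succ j ih =>
      rw [fd_succ _ (j + 1) m, ih, ih, fd_succ F (j + 1) m, fd_succ F j (m + 1)]
      push_cast
      ring

private lemma fd_poly_zero : ∀ (n : ℕ) (f : Polynomial ℚ), f.natDegree ≤ n →
    ∀ m : ℤ, fd^[n + 1] (fun k : ℤ => f.eval (k : ℚ)) m = 0 := by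
  intro n
  induction n with
  | zero =>
      intro f hf m
      obtain ⟨c, rfl⟩ := Polynomial.natDegree_eq_zero.mp (le_antisymm hf (Nat.zero_le _))
      simp [fd]
  | succ n ih =>
      intro f hf m
      have hfun : fd (fun k : ℤ => f.eval (k : ℚ))
          = fun k : ℤ => (f.comp (X + C 1) - f).eval (k : ℚ) := by
        funext k
        simp [fd, Polynomial.eval_comp]
      have hdeg : (f.comp (X + C 1) - f).natDegree ≤ n := by
        rw [Polynomial.natDegree_le_iff_coeff_eq_zero]
        intro k hk
        have h1 : (f.comp (X + C 1)).natDegree ≤ n + 1 := by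
          rw [show f.comp (X + C 1) = Polynomial.taylor 1 f from
            (Polynomial.taylor_apply 1 f).symm]
          rwa [Polynomial.natDegree_taylor]
        rcases eq_or_lt_of_le (Nat.succ_le_of_lt hk) with h | h
        · have hk' : k = n + 1 := h.symm
          subst hk'
          have hco : (f.comp (X + C 1)).coeff (n + 1) = f.coeff (n + 1) := by
            rw [show f.comp (X + C 1) = Polynomial.taylor 1 f from
              (Polynomial.taylor_apply 1 f).symm]
            rw [Polynomial.taylor_coeff]
            have hh : Polynomial.hasseDeriv (n + 1) f = C (f.coeff (n + 1)) := by
              ext i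
              rw [Polynomial.hasseDeriv_coeff]
              rcases Nat.eq_zero_or_pos i with hi | hi
              · subst hi; simp
              · have hz : f.coeff (i + (n + 1)) = 0 :=
                  Polynomial.coeff_eq_zero_of_natDegree_lt (by omega)
                simp [hz, Polynomial.coeff_C, hi.ne']
            simp [hh]
          rw [Polynomial.coeff_sub, hco, sub_self]
        · rw [Polynomial.coeff_sub,
            Polynomial.coeff_eq_zero_of_natDegree_lt (lt_of_le_of_lt h1 h),
            Polynomial.coeff_eq_zero_of_natDegree_lt (lt_of_le_of_lt hf h), sub_zero]
      rw [Function.iterate_succ_apply, hfun]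
      exact ih _ hdeg m

private lemma fd_telescope (F : ℤ → ℚ) (m : ℕ) :
    F 0 = (∑ i ∈ Finset.range (m + 1), (-1 : ℚ) ^ i * fd^[i] F 1)
      + (-1 : ℚ) ^ (m + 1) * fd^[m + 1] F 0 := by
  induction m with
  | zero => simp [fd]
  | succ m ih =>
      rw [Finset.sum_range_succ, fd_succ F (m + 1) 0, ih]
      push_cast
      ring

theorem uniform_bound_numerical (n : ℕ) (f : Polynomial ℚ)
    (hdeg : f.natDegree ≤ n)
    (fI : ℤ → ℤ) (hfI : ∀ k : ℤ, (fI k : ℚ) = f.eval (k : ℚ)) :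
    fI 0 * (Finset.Icc (1 : ℤ) (n + 1)).lcm id ∈
      AddSubgroup.closure {x : ℤ | ∃ k : ℤ, x = k * fI k} := by
  set L : ℤ := (Finset.Icc (1 : ℤ) (n + 1)).lcm id with hL
  set S : Set ℤ := {x : ℤ | ∃ k : ℤ, x = k * fI k} with hS
  set g0 : ℤ → ℤ := fun k => k * fI k with hg0
  have hmem : ∀ i m, fd^[i] g0 m ∈ AddSubgroup.closure S := by
    intro i
    induction i with
    | zero => intro m; exact AddSubgroup.subset_closure ⟨m, rfl⟩
    | succ i ih =>
        intro m
        rw [fd_succ]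
        exact sub_mem (ih (m + 1)) (ih m)
  have hdvd : ∀ i : ℕ, i ≤ n → ((i : ℤ) + 1) * (L / ((i : ℤ) + 1)) = L := by
    intro i hi
    apply Int.mul_ediv_cancel'
    apply Finset.dvd_lcm
    simp only [Finset.mem_Icc]
    omega
  have hcast : ∀ i : ℕ, ((fd^[i + 1] g0 0 : ℤ) : ℚ)
      = fd^[i + 1] (fun k : ℤ => (k : ℚ) * f.eval (k : ℚ)) 0 := by
    intro i
    rw [fd_cast]
    have : (fun m : ℤ => ((g0 m : ℤ) : ℚ)) = fun k : ℤ => (k : ℚ) * f.eval (k : ℚ) := by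
      funext m
      simp only [hg0]
      push_cast
      rw [hfI m]
    rw [this]
  have key : ((fI 0 : ℤ) : ℚ) * ((L : ℤ) : ℚ) = ∑ i ∈ Finset.range (n + 1),
      ((-1 : ℚ) ^ i * ((L / ((i : ℤ) + 1) : ℤ) : ℚ)) * ((fd^[i + 1] g0 0 : ℤ) : ℚ) := by
    calc ((fI 0 : ℤ) : ℚ) * ((L : ℤ) : ℚ)
        = f.eval (((0 : ℤ) : ℚ)) * ((L : ℤ) : ℚ) := by
          rw [hfI 0]
      _ = (∑ i ∈ Finset.range (n + 1),
            (-1 : ℚ) ^ i * fd^[i] (fun k : ℤ => f.eval (k : ℚ)) 1) * ((L : ℤ) : ℚ) := by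
          rw [fd_telescope (fun k : ℤ => f.eval (k : ℚ)) n, fd_poly_zero n f hdeg 0]
          ring
      _ = _ := by
          rw [Finset.sum_mul]
          apply Finset.sum_congr rfl
          intro i hi
          have h2 := hdvd i (Nat.lt_succ_iff.mp (Finset.mem_range.mp hi))
          have h2' : (((i : ℤ) + 1 : ℤ) : ℚ) * (((L / ((i : ℤ) + 1) : ℤ)) : ℚ) = ((L : ℤ) : ℚ) := by
            rw [← Int.cast_mul, h2]
          rw [hcast i, fd_prod _ i 0]
          push_cast at h2' ⊢
          rw [← h2']
          ring
  have hid : fI 0 * L = ∑ i ∈ Finset.range (n + 1),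
      ((-1 : ℤ) ^ i * (L / ((i : ℤ) + 1))) * fd^[i + 1] g0 0 := by
    have hinj : Function.Injective ((↑) : ℤ → ℚ) := Int.cast_injective
    apply hinj
    rw [Int.cast_mul, Int.cast_sum]
    simp only [Int.cast_mul, Int.cast_pow, Int.cast_neg, Int.cast_one]
    exact key
  rw [hid]
  apply _root_.sum_mem
  intro i hi
  have h := hmem (i + 1) 0
  simpa [zsmul_eq_mul] using AddSubgroup.zsmul_mem (AddSubgroup.closure S)
    h ((-1 : ℤ) ^ i * (L / ((i : ℤ) + 1)))
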